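/- There is a constant c₁ = (1/(√3·e))·exp(−∑_{p prime, p≥5} (ln p)/(p(p−1))) ≈ 0.16948 such that for all integers k ≥ 2, the product g(k) = ∏_{p prime, p≥5} p^{⌊2k/p⌋} satisfies g(k) ≥ √(4πk)·(c₁k)^{2k}. -/

import Mathlib

open scoped Classical

/-- The constant `c₁ = (1/(√3·e))·exp(−∑_{p prime, p≥5} (ln p)/(p(p−1))) ≈ 0.16948`. -/
noncomputable def c₁ : ℝ :=
  (1 / (Real.sqrt 3 * Real.exp 1)) *
    Real.exp (-(∑' p : ℕ, if p.Prime ∧ 5 ≤ p then Real.log p / (p * ((p : ℝ) - 1)) else 0))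

open Nat

lemma legendre_split {p n : ℕ} (hp : p.Prime) :
    padicValNat p (n !) = n / p + padicValNat p ((n / p)!) := by
  haveI := Fact.mk hp
  set b := Nat.log p n + 2 with hb
  have h1 : Nat.log p n < b := by omega
  have h2 : Nat.log p (n / p) < b - 1 := by
    have := Nat.log_mono_right (b := p) (Nat.div_le_self n p)
    omega
  rw [padicValNat_factorial h1, padicValNat_factorial h2]
  rw [Finset.sum_eq_sum_Ico_succ_bot (by omega : 1 < b)]
  congr 1
  · simp
  · have hb1 : b = (b - 1) + 1 := by omega
    rw [hb1, show ((1:ℕ) + 1) = 1 + 1 from rfl, ← Finset.sum_Ico_add']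
    refine Finset.sum_congr rfl fun i _ => ?_
    rw [pow_succ', Nat.div_div_eq_div_mul]

lemma padic_fact_le {p n : ℕ} (hp : p.Prime) :
    padicValNat p (n !) ≤ n / (p - 1) := by
  haveI := Fact.mk hp
  have h := sub_one_mul_padicValNat_factorial (p := p) n
  have hple : 1 ≤ p - 1 := by have := hp.two_le; omega
  rw [Nat.le_div_iff_mul_le (by omega)]
  calc padicValNat p (n !) * (p - 1) = (p - 1) * padicValNat p (n !) := mul_comm _ _
    _ = n - (p.digits n).sum := h
    _ ≤ n := Nat.sub_le _ _

lemma stirling_lb (m : ℕ) (hm : 1 ≤ m) :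
    Real.sqrt (2 * Real.pi * m) * (m / Real.exp 1) ^ m ≤ m ! := by
  have h1 : Real.sqrt Real.pi ≤ Stirling.stirlingSeq m := by
    obtain ⟨m, rfl⟩ := Nat.exists_eq_add_of_le hm
    have ht : Filter.Tendsto (Stirling.stirlingSeq ∘ Nat.succ) Filter.atTop
        (nhds (Real.sqrt Real.pi)) :=
      Stirling.tendsto_stirlingSeq_sqrt_pi.comp (Filter.tendsto_add_atTop_nat 1)
    have := Stirling.stirlingSeq'_antitone.le_of_tendsto ht m
    simpa [Nat.succ_eq_add_one, Nat.add_comm] using this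
  have hpos : (0:ℝ) < Real.sqrt (2 * m) * ((m : ℝ) / Real.exp 1) ^ m := by
    have : (0:ℝ) < m := by exact_mod_cast hm
    positivity
  rw [Stirling.stirlingSeq, le_div_iff₀ hpos] at h1
  calc Real.sqrt (2 * Real.pi * m) * ((m : ℝ) / Real.exp 1) ^ m
      = Real.sqrt Real.pi * (Real.sqrt (2 * m) * ((m : ℝ) / Real.exp 1) ^ m) := by
        rw [← mul_assoc, ← Real.sqrt_mul (by positivity : (0:ℝ) ≤ Real.pi) (2 * m)]
        ring_nf
    _ ≤ m ! := h1

lemma summable_F : Summable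
    (fun p : ℕ => if p.Prime ∧ 5 ≤ p then Real.log p / (p * ((p : ℝ) - 1)) else 0) := by
  refine Summable.of_nonneg_of_le (fun p => ?_) (fun p => ?_)
    ((Real.summable_nat_rpow.mpr (by norm_num : (-(3:ℝ)/2) < -1)).mul_left 4)
  · split
    · rename_i h
      have hp5 : (5:ℝ) ≤ p := by exact_mod_cast h.2
      exact div_nonneg (Real.log_nonneg (by linarith)) (by nlinarith)
    · exact le_rfl
  · split
    · rename_i h
      have hp5 : (5:ℝ) ≤ p := by exact_mod_cast h.2
      have hp0 : (0:ℝ) < p := by linarith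
      have hlog : Real.log p ≤ 2 * Real.sqrt p := by
        have h1 : Real.log p = 2 * Real.log (Real.sqrt p) := by
          rw [Real.log_sqrt (by linarith)]; ring
        have h2 : Real.log (Real.sqrt p) ≤ Real.sqrt p - 1 :=
          Real.log_le_sub_one_of_pos (Real.sqrt_pos.mpr (by linarith))
        nlinarith [Real.sqrt_nonneg (p:ℝ)]
      calc Real.log p / ((p:ℝ) * ((p:ℝ)-1)) ≤ (2*Real.sqrt p)/((p:ℝ)*((p:ℝ)/2)) := by
            apply div_le_div₀ (by positivity) hlog (by nlinarith) (by nlinarith)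
        _ = 4 * (p:ℝ)^(-(3:ℝ)/2) := by
            rw [Real.sqrt_eq_rpow,
              show (-(3:ℝ)/2) = (1:ℝ)/2 - 2 by norm_num,
              Real.rpow_sub hp0, Real.rpow_two]
            field_simp
            ring
    · positivity

lemma legendre_split' {p n : ℕ} (hp : p.Prime) :
    (n !).factorization p = n / p + ((n / p)!).factorization p := by
  rw [Nat.factorization_def _ hp, Nat.factorization_def _ hp, legendre_split hp]

lemma fact_factorization_le {p n : ℕ} (hp : p.Prime) :
    (n !).factorization p ≤ n / (p - 1) := by
  rw [Nat.factorization_def _ hp]; exact padic_fact_le hp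


lemma c₁_pos : 0 < c₁ := by unfold c₁; positivity


/-- For all integers `k ≥ 2`, the product `g(k) = ∏_{p prime, p≥5} p^{⌊2k/p⌋}`
(a finite product, since the exponent vanishes for `p > 2k`) satisfies
`g(k) ≥ √(4πk)·(c₁k)^{2k}`. -/
theorem product_primes_lower_bound (k : ℕ) (hk : 2 ≤ k) :
    Real.sqrt (4 * Real.pi * k) * (c₁ * k) ^ (2 * k) ≤
      ∏ p ∈ (Finset.range (2 * k + 1)).filter (fun p => p.Prime ∧ 5 ≤ p),
        (p : ℝ) ^ (2 * k / p) := by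
  have hπ := Real.pi_pos
  set T : ℝ := ∑' p : ℕ, if p.Prime ∧ 5 ≤ p then Real.log p / (p * ((p:ℝ) - 1)) else 0 with hT
  set n := 2 * k with hn
  have hn4 : 4 ≤ n := by omega
  have hn0 : (0:ℝ) < n := by exact_mod_cast (by omega : 0 < n)
  set e : ℕ → ℕ := fun p => (n !).factorization p with he
  set t : ℕ → ℕ := fun p => ((n / p)!).factorization p with ht
  set S := (Finset.range (n+1)).filter (fun p => p.Prime ∧ 5 ≤ p) with hS
  have hSmem : ∀ p ∈ S, p.Prime ∧ 5 ≤ p ∧ p ≤ n := by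
    intro p hp
    rw [hS, Finset.mem_filter, Finset.mem_range] at hp
    exact ⟨hp.2.1, hp.2.2, by omega⟩
  -- ℕ factorization identity
  have h0 : n ! ≠ 0 := Nat.factorial_ne_zero n
  have h1 : ∏ p ∈ (Finset.range (n+1)).filter Nat.Prime, p ^ e p = n ! := by
    conv_rhs => rw [← Nat.factorization_prod_pow_eq_self h0]
    rw [Finsupp.prod]
    refine (Finset.prod_subset ?_ ?_).symm
    · intro p hp
      rw [Nat.support_factorization] at hp
      have hpp := Nat.prime_of_mem_primeFactors hp
      have hpn : p ≤ n := (Nat.Prime.dvd_factorial hpp).mp (Nat.dvd_of_mem_primeFactors hp)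
      have hlt : p < n + 1 := by omega
      simp [Finset.mem_filter, Finset.mem_range, hpp, hlt]
    · intro p _ hps
      have hz : (n !).factorization p = 0 := Finsupp.notMem_support_iff.mp hps
      show p ^ (n !).factorization p = 1
      rw [hz, pow_zero]
  have h2 : ∏ p ∈ (Finset.range (n+1)).filter Nat.Prime, p ^ e p
      = (∏ p ∈ S, p ^ e p) * (2 ^ e 2 * 3 ^ e 3) := by
    rw [← Finset.prod_filter_mul_prod_filter_not
      ((Finset.range (n+1)).filter Nat.Prime) (fun p => 5 ≤ p)]
    congr 1
    · rw [Finset.filter_filter]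
    · have hlow : ((Finset.range (n+1)).filter Nat.Prime).filter (fun p => ¬ 5 ≤ p)
          = {2, 3} := by
        ext p
        simp only [Finset.mem_filter, Finset.mem_range, Finset.mem_insert,
          Finset.mem_singleton, not_le]
        constructor
        · rintro ⟨⟨hlt, hpp⟩, h5⟩
          interval_cases p <;> simp_all (config := {decide := true})
        · rintro (rfl | rfl)
          · exact ⟨⟨by omega, by norm_num⟩, by omega⟩
          · exact ⟨⟨by omega, by norm_num⟩, by omega⟩
      rw [hlow]
      rw [Finset.prod_insert (by norm_num), Finset.prod_singleton]
  have h3 : ∏ p ∈ S, p ^ e p = (∏ p ∈ S, p ^ (n / p)) * ∏ p ∈ S, p ^ t p := by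
    rw [← Finset.prod_mul_distrib]
    refine Finset.prod_congr rfl fun p hp => ?_
    show p ^ (n !).factorization p = p ^ (n / p) * p ^ ((n / p)!).factorization p
    rw [legendre_split' (hSmem p hp).1, pow_add]
  have hprod : n ! = ((∏ p ∈ S, p ^ (n / p)) * ∏ p ∈ S, p ^ t p) * (2 ^ e 2 * 3 ^ e 3) := by
    rw [← h1, h2, h3]
  have hcast : (n ! : ℝ) = ((∏ p ∈ S, (p:ℝ) ^ (n / p)) * ∏ p ∈ S, (p:ℝ) ^ t p)
      * (2 ^ e 2 * 3 ^ e 3) := by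
    have := congrArg (fun m : ℕ => (m : ℝ)) hprod
    push_cast at this
    exact this
  -- bounds
  have hE2 : (2:ℝ) ^ e 2 ≤ 2 ^ n := by
    apply pow_le_pow_right₀ (by norm_num)
    have := fact_factorization_le (n := n) Nat.prime_two
    simpa using this
  have hE3 : (3:ℝ) ^ e 3 ≤ 3 ^ k := by
    apply pow_le_pow_right₀ (by norm_num)
    have h := fact_factorization_le (n := n) Nat.prime_three
    have h2 : n / (3 - 1) = k := by omega
    calc e 3 = (n !).factorization 3 := rfl
      _ ≤ n / (3 - 1) := h
      _ = k := h2
  have hB : ∏ p ∈ S, (p:ℝ) ^ t p ≤ Real.exp (n * T) := by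
    calc ∏ p ∈ S, (p:ℝ) ^ t p
        = Real.exp (∑ p ∈ S, (t p : ℝ) * Real.log p) := by
          rw [Real.exp_sum]
          refine Finset.prod_congr rfl fun p hp => ?_
          have hp5 : 5 ≤ p := (hSmem p hp).2.1
          have hp0 : (0:ℝ) < p := by exact_mod_cast (by omega : 0 < p)
          rw [← Real.log_pow, Real.exp_log (pow_pos hp0 _)]
      _ ≤ Real.exp (∑ p ∈ S, (n:ℝ) * (Real.log p / (p * ((p:ℝ) - 1)))) := by
          rw [Real.exp_le_exp]
          refine Finset.sum_le_sum fun p hp => ?_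
          obtain ⟨hpp, hp5, hpn⟩ := hSmem p hp
          have hp0 : (0:ℝ) < p := by exact_mod_cast (by omega : 0 < p)
          have hp1 : (1:ℝ) < p := by exact_mod_cast (by omega : 1 < p)
          have hlog : 0 ≤ Real.log p := Real.log_nonneg (by linarith)
          have c1 : (t p : ℝ) ≤ (((n/p)/(p-1) : ℕ) : ℝ) :=
            Nat.cast_le.2 (fact_factorization_le hpp)
          have c2 : (((n/p)/(p-1) : ℕ) : ℝ) ≤ ((n/p : ℕ) : ℝ) / ((p-1 : ℕ) : ℝ) :=
            Nat.cast_div_le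
          have c3 : ((n/p : ℕ) : ℝ) ≤ (n:ℝ) / (p:ℝ) := Nat.cast_div_le
          have c4 : ((p-1 : ℕ) : ℝ) = (p:ℝ) - 1 := by
            push_cast [Nat.cast_sub (by omega : 1 ≤ p)]; ring
          have c5 : (t p : ℝ) ≤ (n:ℝ) / (p:ℝ) / ((p:ℝ) - 1) := by
            refine (c1.trans (c2.trans ?_))
            rw [c4]
            gcongr
          have c6 : (t p : ℝ) ≤ (n:ℝ) / ((p:ℝ) * ((p:ℝ) - 1)) := by
            rwa [div_div] at c5
          calc (t p : ℝ) * Real.log p ≤ ((n:ℝ) / ((p:ℝ) * ((p:ℝ) - 1))) * Real.log p :=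
                mul_le_mul_of_nonneg_right c6 hlog
            _ = (n:ℝ) * (Real.log p / (p * ((p:ℝ) - 1))) := by ring
      _ ≤ Real.exp (n * T) := by
          rw [Real.exp_le_exp, ← Finset.mul_sum]
          apply mul_le_mul_of_nonneg_left _ (le_of_lt hn0)
          have hsum : ∑ p ∈ S, Real.log p / (p * ((p:ℝ) - 1))
              = ∑ p ∈ S, (if p.Prime ∧ 5 ≤ p then Real.log p / (p * ((p:ℝ) - 1)) else 0) := by
            refine Finset.sum_congr rfl fun p hp => ?_
            obtain ⟨hpp, hp5, _⟩ := hSmem p hp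
            rw [if_pos ⟨hpp, hp5⟩]
          rw [hsum, hT]
          refine Summable.sum_le_tsum S (fun p _ => ?_) summable_F
          split
          · rename_i h
            have hp5 : (5:ℝ) ≤ p := by exact_mod_cast h.2
            exact div_nonneg (Real.log_nonneg (by linarith)) (by nlinarith)
          · exact le_rfl
  -- Stirling
  have hst : Real.sqrt (2 * Real.pi * n) * ((n:ℝ) / Real.exp 1) ^ n ≤ (n ! : ℝ) :=
    stirling_lb n (by omega)
  -- the constant computation
  have h30 : Real.sqrt 3 ≠ 0 := by positivity
  have heT : Real.exp T ≠ 0 := Real.exp_ne_zero T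
  have he1 : Real.exp 1 ≠ 0 := Real.exp_ne_zero 1
  have hceq : Real.sqrt (4 * Real.pi * k) * (c₁ * k) ^ n * (2 ^ n * 3 ^ k * Real.exp (n * T))
      = Real.sqrt (2 * Real.pi * n) * ((n:ℝ) / Real.exp 1) ^ n := by
    have hs : Real.sqrt (4 * Real.pi * k) = Real.sqrt (2 * Real.pi * n) := by
      congr 1
      rw [hn]; push_cast; ring
    have h3k : (3:ℝ) ^ k = (Real.sqrt 3) ^ n := by
      rw [hn, pow_mul, Real.sq_sqrt (by norm_num : (0:ℝ) ≤ 3)]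
    have hexp : Real.exp ((n:ℝ) * T) = (Real.exp T) ^ n := Real.exp_nat_mul T n
    rw [hs, h3k, hexp, mul_assoc, ← mul_pow, ← mul_pow, ← mul_pow]
    congr 2
    rw [show c₁ = 1 / (Real.sqrt 3 * Real.exp 1) * Real.exp (-T) from rfl, Real.exp_neg]
    field_simp
    rw [hn]; push_cast; ring
  -- assemble
  have hSpos : ∀ p ∈ S, (0:ℝ) < p := fun p hp => by
    have := (hSmem p hp).2.1; exact_mod_cast (by omega : 0 < p)
  have hDpos : (0:ℝ) < (∏ p ∈ S, (p:ℝ) ^ t p) * (2 ^ e 2 * 3 ^ e 3) := by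
    apply mul_pos (Finset.prod_pos fun p hp => pow_pos (hSpos p hp) _)
    positivity
  refine le_of_mul_le_mul_right ?_ hDpos
  have hc₁k : (0:ℝ) ≤ Real.sqrt (4 * Real.pi * k) * (c₁ * k) ^ n := by
    have := c₁_pos
    positivity
  calc Real.sqrt (4 * Real.pi * k) * (c₁ * k) ^ n
        * ((∏ p ∈ S, (p:ℝ) ^ t p) * (2 ^ e 2 * 3 ^ e 3))
      ≤ Real.sqrt (4 * Real.pi * k) * (c₁ * k) ^ n * (2 ^ n * 3 ^ k * Real.exp (n * T)) := by
        apply mul_le_mul_of_nonneg_left _ hc₁k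
        calc (∏ p ∈ S, (p:ℝ) ^ t p) * (2 ^ e 2 * 3 ^ e 3)
            ≤ Real.exp (n * T) * (2 ^ n * 3 ^ k) := by
              apply mul_le_mul hB (mul_le_mul hE2 hE3 (by positivity) (by positivity))
                (by positivity)
              positivity
          _ = 2 ^ n * 3 ^ k * Real.exp (n * T) := by ring
    _ = Real.sqrt (2 * Real.pi * n) * ((n:ℝ) / Real.exp 1) ^ n := hceq
    _ ≤ (n ! : ℝ) := hst
    _ = (∏ p ∈ S, (p:ℝ) ^ (n / p))
        * ((∏ p ∈ S, (p:ℝ) ^ t p) * (2 ^ e 2 * 3 ^ e 3)) := by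
        rw [hcast]; ring
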